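/- Lemma 4.4 (averaging over hyperplanes in irrational directions): Let d ≥ 2 and let e be a unit vector in ℝ^d with e ∉ ℝℤ^d. Let ℱ be a compact subset (in the uniform norm) of the space of continuous ℤ^d-periodic functions ℝ^d → ℝ. Then sup { | ∫_{⟨e⟩^⊥} u(x + y) (4πt)^{-(d-1)/2} exp(−‖y‖²/(4t)) dℋ^{d-1}(y) − ∫_{[0,1]^d} u(z) dz | : x ∈ ℝ^d, u ∈ ℱ } → 0 as t → ∞. -/

import Mathlib

open Set Filter Topology MeasureTheory BoundedContinuousFunction

noncomputable section

abbrev Euc (d : ℕ) := EuclideanSpace ℝ (Fin d)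

def IsIntVec {d : ℕ} (z : Euc d) : Prop := ∀ i, ∃ n : ℤ, z i = (n : ℝ)

/-- p ∈ ℝℤ^d, i.e. p is a real multiple of an integer vector. -/
def RatDir {d : ℕ} (p : Euc d) : Prop :=
  ∃ (c : ℝ) (k : Fin d → ℤ), ∀ i, p i = c * (k i : ℝ)

def unitCube (d : ℕ) : Set (Euc d) := {y | ∀ i, y i ∈ Set.Icc (0:ℝ) 1}

namespace HypAvg

open Complex

local notation "π" => Real.pi

variable {d : ℕ}

/-! ### basic objects -/

abbrev Tor (d : ℕ) := Fin d → AddCircle (1:ℝ)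

def torProj (d : ℕ) : Euc d → Tor d := fun x i => (x i : AddCircle (1:ℝ))

def kvec (d : ℕ) (k : Fin d → ℤ) : Euc d := WithLp.toLp 2 (fun i => (k i : ℝ))

def eChar (k : Fin d → ℤ) : Euc d → ℂ :=
  fun x => Complex.exp (2 * π * I * ∑ i, (k i : ℂ) * (x i : ℂ))

/-- the Gaussian kernel on the hyperplane -/
def ker (d : ℕ) (t : ℝ) (e : Euc d) (y : (ℝ ∙ e)ᗮ) : ℝ :=
  (4 * π * t) ^ (-((d : ℝ) - 1) / 2) * Real.exp (-‖(y : Euc d)‖ ^ 2 / (4 * t))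

def Avg (e : Euc d) (f : Euc d → ℂ) (t : ℝ) (x : Euc d) : ℂ :=
  ∫ y : (ℝ ∙ e)ᗮ, f (x + (y : Euc d)) * (ker d t e y : ℂ)

def CubeInt (f : Euc d → ℂ) : ℂ := ∫ z in unitCube d, f z

def Nice (f : Euc d → ℂ) : Prop := Continuous f ∧ ∃ C, ∀ x, ‖f x‖ ≤ C

def Gprop (e : Euc d) (f : Euc d → ℂ) : Prop :=
  ∀ η > 0, ∃ T : ℝ, ∀ t ≥ T, 0 < t → ∀ x : Euc d, ‖Avg e f t x - CubeInt f‖ ≤ η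

/-! ### kernel facts -/

variable {e : Euc d}

theorem finrank_orth (he : ‖e‖ = 1) : Module.finrank ℝ ((ℝ ∙ e)ᗮ) = d - 1 := by
  
  have he0 : e ≠ 0 := by intro h; rw [h, norm_zero] at he; norm_num at he
  have h := Submodule.finrank_add_finrank_orthogonal (K := (ℝ ∙ e))
  rw [finrank_span_singleton he0] at h
  have h2 : Module.finrank ℝ (Euc d) = d := finrank_euclideanSpace_fin
  omega

theorem ker_integrable (t : ℝ) (ht : 0 < t) : Integrable (fun y : (ℝ ∙ e)ᗮ => ker d t e y) := by
  
  unfold ker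
  apply Integrable.const_mul
  have hb : (0:ℝ) < 1/(4*t) := by positivity
  have h := (GaussianFourier.integrable_cexp_neg_mul_sq_norm_add
    (V := ((ℝ ∙ e)ᗮ : Submodule ℝ (Euc d))) (b := ((1/(4*t) : ℝ) : ℂ))
    (by simpa using hb) 0 0).norm
  apply h.congr
  filter_upwards with y
  rw [zero_mul, add_zero, Complex.norm_exp]
  congr 1
  have hn : ‖y‖ = ‖(y : Euc d)‖ := Submodule.coe_norm y
  rw [← hn]
  rw [show (-(((1:ℝ)/(4*t) : ℝ):ℂ) * (‖y‖:ℂ)^2 : ℂ) = ((-(1/(4*t)) * ‖y‖^2 : ℝ) : ℂ) by push_cast; ring]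
  rw [Complex.ofReal_re]
  field_simp

theorem ker_nonneg (t : ℝ) (ht : 0 < t) (y : (ℝ ∙ e)ᗮ) : 0 ≤ ker d t e y := by
  unfold ker; positivity

theorem ker_integral (hd : 1 ≤ d) (he : ‖e‖ = 1) (t : ℝ) (ht : 0 < t) :
    ∫ y : (ℝ ∙ e)ᗮ, ker d t e y = 1 := by
  
  unfold ker
  rw [MeasureTheory.integral_const_mul]
  have hc : ∀ y : ((ℝ ∙ e)ᗮ : Submodule ℝ (Euc d)),
      Real.exp (-‖(y : Euc d)‖^2/(4*t)) = Real.exp (-(1/(4*t)) * ‖y‖^2) := by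
    intro y
    rw [← Submodule.coe_norm]
    congr 1
    field_simp
  simp_rw [hc]
  rw [GaussianFourier.integral_rexp_neg_mul_sq_norm (by positivity), finrank_orth he]
  have h1 : Real.pi / (1/(4*t)) = 4*π*t := by field_simp
  have h2 : (((d-1:ℕ)):ℝ)/2 = ((d:ℝ)-1)/2 := by
    rw [Nat.cast_sub hd]; norm_num
  rw [h1, h2, ← Real.rpow_add (by positivity)]
  rw [show -((d:ℝ)-1)/2 + ((d:ℝ)-1)/2 = 0 by ring, Real.rpow_zero]

theorem avg_integrable {f : Euc d → ℂ} (hf : Nice f) (t : ℝ) (ht : 0 < t) (x : Euc d) :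
    Integrable (fun y : (ℝ ∙ e)ᗮ => f (x + (y : Euc d)) * (ker d t e y : ℂ)) := by
  
  obtain ⟨C, hC⟩ := hf.2
  apply Integrable.bdd_mul (c := C) ((ker_integrable t ht).ofReal)
  · exact (hf.1.comp (continuous_const.add continuous_subtype_val)).aestronglyMeasurable
  · exact ae_of_all _ fun y => hC _

theorem avg_sub_le (hd : 1 ≤ d) (he : ‖e‖ = 1) {f g : Euc d → ℂ} (hf : Nice f) (hg : Nice g)
    {ε : ℝ} (hfg : ∀ z, ‖f z - g z‖ ≤ ε) (t : ℝ) (ht : 0 < t) (x : Euc d) :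
    ‖Avg e f t x - Avg e g t x‖ ≤ ε := by
  
  have hfg' : Nice (fun z => f z - g z) := by
    obtain ⟨Cf, hCf⟩ := hf.2; obtain ⟨Cg, hCg⟩ := hg.2
    exact ⟨hf.1.sub hg.1, Cf + Cg, fun x =>
      le_trans (norm_sub_le _ _) (add_le_add (hCf x) (hCg x))⟩
  have key : Avg e f t x - Avg e g t x
      = ∫ y : ((ℝ ∙ e)ᗮ : Submodule ℝ (Euc d)),
          (f (x + (y:Euc d)) - g (x + (y:Euc d))) * (ker d t e y : ℂ) := by
    rw [Avg, Avg, ← MeasureTheory.integral_sub (avg_integrable hf t ht x)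
      (avg_integrable hg t ht x)]
    congr 1; funext y; ring
  rw [key]
  calc ‖∫ y : ((ℝ ∙ e)ᗮ : Submodule ℝ (Euc d)),
        (f (x + (y:Euc d)) - g (x + (y:Euc d))) * (ker d t e y : ℂ)‖
      ≤ ∫ y : ((ℝ ∙ e)ᗮ : Submodule ℝ (Euc d)),
        ‖(f (x + (y:Euc d)) - g (x + (y:Euc d))) * (ker d t e y : ℂ)‖ :=
        MeasureTheory.norm_integral_le_integral_norm _
    _ ≤ ∫ y : ((ℝ ∙ e)ᗮ : Submodule ℝ (Euc d)), ε * ker d t e y := by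
        apply MeasureTheory.integral_mono ((avg_integrable hfg' t ht x).norm)
          ((ker_integrable t ht).const_mul ε)
        intro y
        dsimp only
        rw [norm_mul, Complex.norm_real, Real.norm_eq_abs,
          _root_.abs_of_nonneg (ker_nonneg t ht y)]
        exact mul_le_mul_of_nonneg_right (hfg _) (ker_nonneg t ht y)
    _ = ε := by rw [MeasureTheory.integral_const_mul, ker_integral hd he t ht, mul_one]

theorem volume_unitCube : volume (unitCube d) = 1 := by
  
  have h : unitCube d =
      (MeasurableEquiv.toLp 2 (Fin d → ℝ)).symm ⁻¹' (Set.univ.pi fun _ => Set.Icc (0:ℝ) 1) := by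
    ext x
    simp only [unitCube, Set.mem_setOf_eq, Set.mem_preimage, Set.mem_univ_pi]
    exact Iff.rfl
  rw [h, MeasurePreserving.measure_preimage
    (EuclideanSpace.volume_preserving_symm_measurableEquiv_toLp (Fin d))
    (MeasurableSet.univ_pi fun _ => measurableSet_Icc).nullMeasurableSet]
  rw [MeasureTheory.volume_pi_pi]
  simp

theorem measurableSet_unitCube : MeasurableSet (unitCube d) := by
  
  have h : unitCube d =
      (MeasurableEquiv.toLp 2 (Fin d → ℝ)).symm ⁻¹' (Set.univ.pi fun _ => Set.Icc (0:ℝ) 1) := by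
    ext x
    simp only [unitCube, Set.mem_setOf_eq, Set.mem_preimage, Set.mem_univ_pi]
    exact Iff.rfl
  rw [h]
  exact (MeasurableEquiv.toLp 2 (Fin d → ℝ)).symm.measurable
    (MeasurableSet.univ_pi fun _ => measurableSet_Icc)

theorem cubeInt_sub_le {f g : Euc d → ℂ} (hf : Nice f) (hg : Nice g)
    {ε : ℝ} (hε : 0 ≤ ε) (hfg : ∀ z, ‖f z - g z‖ ≤ ε) :
    ‖CubeInt f - CubeInt g‖ ≤ ε := by
  
  have hfg' : Nice (fun z => f z - g z) := by
    obtain ⟨Cf, hCf⟩ := hf.2; obtain ⟨Cg, hCg⟩ := hg.2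
    exact ⟨hf.1.sub hg.1, Cf + Cg, fun x =>
      le_trans (norm_sub_le _ _) (add_le_add (hCf x) (hCg x))⟩
  have hfin : volume (unitCube d) < ⊤ := by rw [volume_unitCube]; norm_num
  have hint : ∀ {h : Euc d → ℂ}, Nice h → IntegrableOn h (unitCube d) := by
    intro h hh
    obtain ⟨C, hC⟩ := hh.2
    haveI : IsFiniteMeasure (volume.restrict (unitCube d)) :=
      ⟨by rw [Measure.restrict_apply_univ]; exact hfin⟩
    exact Integrable.mono' (integrable_const C) hh.1.aestronglyMeasurable.restrict
      (Filter.Eventually.of_forall hC)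
  have key : CubeInt f - CubeInt g = ∫ z in unitCube d, (f z - g z) := by
    rw [CubeInt, CubeInt, ← MeasureTheory.integral_sub (hint hf) (hint hg)]
  rw [key]
  calc ‖∫ z in unitCube d, (f z - g z)‖ ≤ ε * (volume (unitCube d)).toReal :=
        MeasureTheory.norm_setIntegral_le_of_norm_le_const hfin (fun z _ => hfg z)
    _ = ε := by rw [volume_unitCube]; simp

/-! ### characters -/

theorem norm_eChar (k : Fin d → ℤ) (x : Euc d) : ‖eChar k x‖ = 1 := by
  
  rw [eChar]
  have h : (∑ i, (k i:ℂ) * (x i:ℂ)) = ((∑ i, (k i:ℝ) * (x i) : ℝ) : ℂ) := by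
    push_cast; ring
  rw [h, Complex.norm_exp]
  have : (2 * ↑π * I * ((∑ i, (k i:ℝ) * (x i) : ℝ) : ℂ)).re = 0 := by
    simp [Complex.mul_re]
  rw [this, Real.exp_zero]

theorem eChar_nice (k : Fin d → ℤ) : Nice (eChar k) := by
  
  constructor
  · apply Complex.continuous_exp.comp
    apply continuous_const.mul
    apply continuous_finset_sum
    intro i _
    exact continuous_const.mul
      (Complex.continuous_ofReal.comp (EuclideanSpace.proj (𝕜 := ℝ) i).continuous)
  · exact ⟨1, fun x => le_of_eq (norm_eChar k x)⟩

theorem inner_proj (x : Euc d) (y : (ℝ ∙ e)ᗮ) :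
    (inner ℝ x (y : Euc d) : ℝ) = inner ℝ (Submodule.orthogonalProjectionOnto (ℝ ∙ e)ᗮ x) y := by
  
  set P := Submodule.orthogonalProjectionOnto (ℝ ∙ e)ᗮ
  have hm : x - ↑(P x) ∈ ((ℝ ∙ e)ᗮ)ᗮ := Submodule.sub_starProjection_mem_orthogonal x
  have h0 : (inner ℝ (x - ↑(P x)) (y : Euc d) : ℝ) = 0 := by
    have := (Submodule.mem_orthogonal _ _).1 hm (y : Euc d) y.2
    rw [real_inner_comm] at this
    exact this
  have hx : x = ↑(P x) + (x - ↑(P x)) := by abel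
  conv_lhs => rw [hx]
  rw [inner_add_left, h0, add_zero, Submodule.coe_inner]

theorem proj_ne_zero (hirr : ¬ RatDir e) {k : Fin d → ℤ} (hk : k ≠ 0) :
    Submodule.orthogonalProjectionOnto (ℝ ∙ e)ᗮ (kvec d k) ≠ 0 := by
  
  intro hP
  have hm : kvec d k - ↑(Submodule.orthogonalProjectionOnto (ℝ ∙ e)ᗮ (kvec d k)) ∈ ((ℝ ∙ e)ᗮ)ᗮ :=
    Submodule.sub_starProjection_mem_orthogonal _
  rw [hP] at hm
  simp only [ZeroMemClass.coe_zero, sub_zero] at hm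
  rw [Submodule.orthogonal_orthogonal] at hm
  obtain ⟨c, hc⟩ := Submodule.mem_span_singleton.1 hm
  have hk0 : kvec d k ≠ 0 := by
    intro h
    apply hk
    funext i
    have : (k i : ℝ) = 0 := by simpa [kvec] using congrArg (fun v : Euc d => v i) h
    exact_mod_cast this
  have hc0 : c ≠ 0 := by
    intro h; rw [h, zero_smul] at hc; exact hk0 hc.symm
  apply hirr
  refine ⟨c⁻¹, k, fun i => ?_⟩
  have : c * e i = (k i : ℝ) := by
    have := congrArg (fun v : Euc d => v i) hc
    simpa [kvec] using this
  field_simp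
  linarith [this]

theorem avg_char (hd : 1 ≤ d) (he : ‖e‖ = 1) (k : Fin d → ℤ) (t : ℝ) (ht : 0 < t) (x : Euc d) :
    Avg e (eChar k) t x = eChar k x *
      Real.exp (-(4 * π ^ 2 * t) * ‖Submodule.orthogonalProjectionOnto (ℝ ∙ e)ᗮ (kvec d k)‖ ^ 2) := by
  classical
  set w := Submodule.orthogonalProjectionOnto (ℝ ∙ e)ᗮ (kvec d k) with hw
  have ht' : (t:ℂ) ≠ 0 := by exact_mod_cast ne_of_gt ht
  have hb : (0:ℝ) < 1/(4*t) := by positivity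
  have hbC : (0:ℂ).re < (((1/(4*t) : ℝ)):ℂ).re := by simpa using hb
  have key : ∀ y : (ℝ ∙ e)ᗮ, eChar k (x + (y : Euc d)) * (ker d t e y : ℂ)
      = (eChar k x * (((4*π*t) ^ (-((d:ℝ)-1)/2) : ℝ) : ℂ)) *
        Complex.exp (-(((1/(4*t) : ℝ)):ℂ) * (‖y‖:ℂ)^2 + (2*π*I) * ((inner ℝ w y : ℝ):ℂ)) := by
    intro y
    have hip : (inner ℝ w y : ℝ) = ∑ i, (k i : ℝ) * ((y : Euc d) i) := by
      rw [← inner_proj]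
      simp [kvec, PiLp.inner_apply, RCLike.inner_apply]
      exact Finset.sum_congr rfl fun i _ => mul_comm _ _
    have h1 : (∑ i, (k i:ℂ) * (((x + (y : Euc d)) i : ℝ):ℂ))
        = (∑ i, (k i:ℂ) * ((x i : ℝ):ℂ)) + ((inner ℝ w y : ℝ) : ℂ) := by
      rw [hip]
      push_cast
      rw [← Finset.sum_add_distrib]
      refine Finset.sum_congr rfl fun i _ => ?_
      have : (x + (y : Euc d)) i = x i + (y : Euc d) i := rfl
      rw [this]
      push_cast
      ring
    rw [eChar, eChar, h1, mul_add, Complex.exp_add, ker]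
    push_cast
    rw [Complex.exp_add]
    have hD : Complex.exp (-((‖(y : Euc d)‖:ℝ):ℂ)^2/(4*(t:ℂ)))
        = Complex.exp (-(1/(4*(t:ℂ))) * ((‖y‖:ℝ):ℂ)^2) := by
      rw [Submodule.coe_norm]
      congr 1
      field_simp
    rw [hD]
    ring
  rw [Avg]
  simp_rw [key]
  rw [MeasureTheory.integral_const_mul]
  rw [GaussianFourier.integral_cexp_neg_mul_sq_norm_add hbC (2*π*I) w]
  have hrank : (Module.finrank ℝ ((ℝ ∙ e)ᗮ : Submodule ℝ (Euc d)) / 2 : ℂ)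
      = ((((d:ℝ)-1)/2 : ℝ) : ℂ) := by
    rw [finrank_orth he]
    push_cast [Nat.cast_sub hd]
    ring
  have hbase : ((π:ℂ) / (((1/(4*t) : ℝ)):ℂ)) = (((4*π*t : ℝ)):ℂ) := by
    push_cast
    rw [one_div, div_inv_eq_mul]
    ring
  have hpow : ((π:ℂ) / (((1/(4*t) : ℝ)):ℂ)) ^ (Module.finrank ℝ ((ℝ ∙ e)ᗮ : Submodule ℝ (Euc d)) / 2 : ℂ)
      = (((4*π*t) ^ (((d:ℝ)-1)/2) : ℝ) : ℂ) := by
    rw [hrank, hbase, ← Complex.ofReal_cpow (by positivity)]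
  have hexp : Complex.exp ((2*(π:ℂ)*I)^2 * ((‖w‖:ℝ):ℂ)^2 / (4 * (((1/(4*t) : ℝ)):ℂ)))
      = ((Real.exp (-(4*π^2*t) * ‖w‖^2) : ℝ) : ℂ) := by
    rw [Complex.ofReal_exp]
    congr 1
    rw [show (2*(π:ℂ)*I)^2 = -(4*(π:ℂ)^2) by rw [mul_pow]; rw [Complex.I_sq]; ring]
    push_cast
    field_simp
  rw [hpow, hexp]
  rw [show eChar k x * (((4*π*t) ^ (-((d:ℝ)-1)/2) : ℝ) : ℂ) *
        ((((4*π*t) ^ (((d:ℝ)-1)/2) : ℝ) : ℂ) * ((Real.exp (-(4*π^2*t) * ‖w‖^2) : ℝ) : ℂ))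
      = eChar k x * ((Real.exp (-(4*π^2*t) * ‖w‖^2) : ℝ) : ℂ) *
        (((((4*π*t) ^ (-((d:ℝ)-1)/2) : ℝ)):ℂ) * (((4*π*t) ^ (((d:ℝ)-1)/2) : ℝ) : ℂ)) by ring]
  rw [show ((((4*π*t) ^ (-((d:ℝ)-1)/2) : ℝ)):ℂ) * (((4*π*t) ^ (((d:ℝ)-1)/2) : ℝ) : ℂ) = 1 by
    rw [← Complex.ofReal_mul, ← Real.rpow_add (by positivity),
      show -((d:ℝ)-1)/2 + ((d:ℝ)-1)/2 = 0 by ring, Real.rpow_zero]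
    norm_cast]
  rw [mul_one]

theorem cube_char (k : Fin d → ℤ) :
    CubeInt (eChar k) = if k = 0 then 1 else 0 := by
  
  classical
  rw [CubeInt, ← MeasureTheory.integral_indicator measurableSet_unitCube]
  have h : ∀ z : Euc d, (unitCube d).indicator (eChar k) z
      = ∏ i, (Set.Icc (0:ℝ) 1).indicator
          (fun a => Complex.exp (2 * π * I * (k i : ℂ) * (a : ℂ))) (z i) := by
    intro z
    by_cases hz : z ∈ unitCube d
    · rw [Set.indicator_of_mem hz]
      rw [Finset.prod_congr rfl (fun i _ => Set.indicator_of_mem (hz i) _)]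
      rw [eChar, ← Complex.exp_sum]
      congr 1
      rw [Finset.mul_sum]
      exact Finset.sum_congr rfl fun i _ => by ring
    · rw [Set.indicator_of_notMem hz]
      rw [unitCube, Set.mem_setOf_eq] at hz
      push_neg at hz
      obtain ⟨i, hi⟩ := hz
      symm
      apply Finset.prod_eq_zero (Finset.mem_univ i)
      rw [Set.indicator_of_notMem hi]
  simp_rw [h]
  rw [← MeasurePreserving.integral_comp
    (EuclideanSpace.volume_preserving_symm_measurableEquiv_toLp (Fin d)).symm
    (MeasurableEquiv.measurableEmbedding _)]
  rw [show (fun x : Fin d → ℝ => ∏ i, (Set.Icc (0:ℝ) 1).indicator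
        (fun a => Complex.exp (2 * π * I * (k i : ℂ) * (a : ℂ)))
        (((MeasurableEquiv.toLp 2 (Fin d → ℝ)).symm.symm x) i))
      = fun x : Fin d → ℝ => ∏ i, (Set.Icc (0:ℝ) 1).indicator
        (fun a => Complex.exp (2 * π * I * (k i : ℂ) * (a : ℂ))) (x i) from rfl]
  rw [MeasureTheory.integral_fintype_prod_volume_eq_prod (ι := Fin d)
    (f := fun i a => (Set.Icc (0:ℝ) 1).indicator
      (fun a => Complex.exp (2 * π * I * (k i : ℂ) * (a : ℂ))) a)]
  have key1 : ∀ n : ℤ, (∫ a : ℝ, (Set.Icc (0:ℝ) 1).indicator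
      (fun a => Complex.exp (2 * π * I * (n:ℂ) * (a:ℂ))) a) = if n = 0 then 1 else 0 := by
    intro n
    rw [MeasureTheory.integral_indicator measurableSet_Icc,
      MeasureTheory.integral_Icc_eq_integral_Ioc,
      ← intervalIntegral.integral_of_le zero_le_one]
    by_cases hn : n = 0
    · subst hn; simp
    · rw [if_neg hn]
      have hc : (2 * (π:ℂ) * I * (n:ℂ)) ≠ 0 := by
        simp [Real.pi_ne_zero, Complex.I_ne_zero, hn, Complex.ofReal_ne_zero]
      have := integral_exp_mul_complex (a := 0) (b := 1) hc
      simp only [Complex.ofReal_zero, mul_zero, Complex.ofReal_one, mul_one] at this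
      rw [show (fun a : ℝ => Complex.exp (2 * ↑π * I * (n:ℂ) * (a:ℂ)))
          = fun a : ℝ => Complex.exp ((2 * ↑π * I * (n:ℂ)) * (a:ℂ)) from rfl, this]
      rw [show (2 * (π:ℂ) * I * (n:ℂ)) = (n:ℂ) * (2 * ↑π * I) by ring,
        Complex.exp_int_mul_two_pi_mul_I, Complex.exp_zero]
      simp
  simp_rw [key1]
  by_cases hk : k = 0
  · subst hk; simp
  · rw [if_neg hk]
    have : ∃ i, k i ≠ 0 := by
      by_contra h
      push_neg at h
      exact hk (funext h)
    obtain ⟨i, hi⟩ := this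
    apply Finset.prod_eq_zero (Finset.mem_univ i)
    rw [if_neg hi]

theorem Gprop_char (hd : 1 ≤ d) (he : ‖e‖ = 1) (hirr : ¬ RatDir e) (k : Fin d → ℤ) :
    Gprop e (eChar k) := by
  
  intro η hη
  by_cases hk : k = 0
  · refine ⟨1, fun t _ ht x => ?_⟩
    subst hk
    rw [avg_char hd he 0 t ht x, cube_char, if_pos rfl]
    have h0 : kvec d (0 : Fin d → ℤ) = 0 := by
      ext i; simp [kvec]
    rw [h0, map_zero, norm_zero]
    have : eChar (0 : Fin d → ℤ) x = 1 := by
      rw [eChar]; simp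
    rw [this]
    simp [le_of_lt hη]
  · set w := Submodule.orthogonalProjectionOnto (ℝ ∙ e)ᗮ (kvec d k) with hwdef
    have hw : 0 < ‖w‖ := norm_pos_iff.2 (proj_ne_zero hirr hk)
    set a : ℝ := 4 * π^2 * ‖w‖^2 with ha
    have ha0 : 0 < a := by
      have := Real.pi_pos
      positivity
    refine ⟨(-Real.log η)/a, fun t hT ht x => ?_⟩
    rw [avg_char hd he k t ht x, cube_char, if_neg hk, sub_zero, norm_mul, norm_eChar,
      one_mul, Complex.norm_real, Real.norm_eq_abs,
      _root_.abs_of_nonneg (Real.exp_nonneg _)]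
    have h1 : -(4 * π ^ 2 * t) * ‖w‖ ^ 2 = -(a * t) := by rw [ha]; ring
    rw [h1]
    have h2 : -Real.log η ≤ a * t := by
      have h3 : -Real.log η ≤ t * a := (div_le_iff₀ ha0).mp hT
      linarith [h3, mul_comm t a ▸ h3]
    calc Real.exp (-(a*t)) ≤ Real.exp (Real.log η) := by
          apply Real.exp_le_exp.2
          linarith
      _ = η := Real.exp_log hη

/-! ### closure properties of Gprop -/

theorem Nice_zero : Nice (fun _ : Euc d => (0:ℂ)) :=
  ⟨continuous_const, 0, fun _ => by simp⟩

theorem Nice.add {f g : Euc d → ℂ} (hf : Nice f) (hg : Nice g) :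
    Nice (fun x => f x + g x) := by
  obtain ⟨Cf, hCf⟩ := hf.2; obtain ⟨Cg, hCg⟩ := hg.2
  exact ⟨hf.1.add hg.1, Cf + Cg, fun x =>
    le_trans (norm_add_le _ _) (add_le_add (hCf x) (hCg x))⟩

theorem Nice_sum {ι : Type*} (s : Finset ι) (h : ι → Euc d → ℂ)
    (hnice : ∀ k ∈ s, Nice (h k)) : Nice (fun x => ∑ k ∈ s, h k x) := by
  classical
  induction s using Finset.induction_on with
  | empty => simpa using (Nice_zero (d := d))
  | @insert i s his ih =>
    have : (fun x => ∑ k ∈ insert i s, h k x) = fun x => h i x + ∑ k ∈ s, h k x := by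
      funext x; rw [Finset.sum_insert his]
    rw [this]
    exact (hnice i (Finset.mem_insert_self i s)).add
      (ih fun k hk => hnice k (Finset.mem_insert_of_mem hk))

theorem Gprop_sum (hd : 1 ≤ d) (he : ‖e‖ = 1) {ι : Type*} (s : Finset ι) (h : ι → Euc d → ℂ)
    (hnice : ∀ k ∈ s, Nice (h k)) (hG : ∀ k ∈ s, Gprop e (h k)) :
    Gprop e (fun x => ∑ k ∈ s, h k x) := by
  
  classical
  induction s using Finset.induction_on with
  | empty =>
    intro η hη
    refine ⟨1, fun t _ ht x => ?_⟩
    have h1 : Avg e (fun _ => ∑ k ∈ (∅ : Finset ι), h k (0:Euc d)) t x = 0 := by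
      rw [Avg]; simp
    simp only [Finset.sum_empty]
    have h1 : Avg e (fun _ : Euc d => (0:ℂ)) t x = 0 := by rw [Avg]; simp
    have h2 : CubeInt (fun _ : Euc d => (0:ℂ)) = 0 := by rw [CubeInt]; simp
    rw [h1, h2, sub_zero, norm_zero]
    exact le_of_lt hη
  | @insert i s his ih =>
    intro η hη
    have hni : Nice (h i) := hnice i (Finset.mem_insert_self i s)
    have hns : Nice (fun x => ∑ k ∈ s, h k x) :=
      Nice_sum s h fun k hk => hnice k (Finset.mem_insert_of_mem hk)
    obtain ⟨T1, hT1⟩ := hG i (Finset.mem_insert_self i s) (η/2) (by positivity)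
    obtain ⟨T2, hT2⟩ := ih (fun k hk => hnice k (Finset.mem_insert_of_mem hk))
      (fun k hk => hG k (Finset.mem_insert_of_mem hk)) (η/2) (by positivity)
    refine ⟨max T1 T2, fun t ht ht0 x => ?_⟩
    have hsum : ∀ z : Euc d, ∑ k ∈ insert i s, h k z = h i z + ∑ k ∈ s, h k z := by
      intro z; rw [Finset.sum_insert his]
    have hA : Avg e (fun x => ∑ k ∈ insert i s, h k x) t x
        = Avg e (h i) t x + Avg e (fun x => ∑ k ∈ s, h k x) t x := by
      rw [Avg, Avg, Avg, ← MeasureTheory.integral_add (avg_integrable hni t ht0 x)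
        (avg_integrable hns t ht0 x)]
      congr 1; funext y
      rw [hsum]; ring
    have hC : CubeInt (fun x => ∑ k ∈ insert i s, h k x)
        = CubeInt (h i) + CubeInt (fun x => ∑ k ∈ s, h k x) := by
      have hfin : volume (unitCube d) < ⊤ := by rw [volume_unitCube]; norm_num
      haveI : IsFiniteMeasure (volume.restrict (unitCube d)) :=
        ⟨by rw [Measure.restrict_apply_univ]; exact hfin⟩
      have hint : ∀ {g : Euc d → ℂ}, Nice g → IntegrableOn g (unitCube d) := by
        intro g hg
        obtain ⟨C, hC⟩ := hg.2
        exact Integrable.mono' (integrable_const C) hg.1.aestronglyMeasurable.restrict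
          (Filter.Eventually.of_forall hC)
      rw [CubeInt, CubeInt, CubeInt, ← MeasureTheory.integral_add (hint hni) (hint hns)]
      apply MeasureTheory.integral_congr_ae
      filter_upwards with z
      rw [hsum]
    rw [hA, hC]
    have := hT1 t (le_trans (le_max_left _ _) ht) ht0 x
    have := hT2 t (le_trans (le_max_right _ _) ht) ht0 x
    calc ‖Avg e (h i) t x + Avg e (fun x => ∑ k ∈ s, h k x) t x -
          (CubeInt (h i) + CubeInt (fun x => ∑ k ∈ s, h k x))‖
        ≤ ‖Avg e (h i) t x - CubeInt (h i)‖ +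
          ‖Avg e (fun x => ∑ k ∈ s, h k x) t x - CubeInt (fun x => ∑ k ∈ s, h k x)‖ := by
          apply le_trans (le_of_eq (by ring_nf)) (norm_add_le _ _)
      _ ≤ η/2 + η/2 := by
          apply add_le_add
          · exact hT1 t (le_trans (le_max_left _ _) ht) ht0 x
          · exact hT2 t (le_trans (le_max_right _ _) ht) ht0 x
      _ = η := by ring

theorem Gprop_smul {f : Euc d → ℂ} (hf : Nice f) (hG : Gprop e f) (a : ℂ) :
    Gprop e (fun x => a * f x) := by
  
  intro η hη
  by_cases ha : a = 0
  · refine ⟨1, fun t _ ht x => ?_⟩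
    subst ha
    simp only [zero_mul]
    have h1 : Avg e (fun _ => (0:ℂ)) t x = 0 := by
      rw [Avg]; simp
    have h2 : CubeInt (fun _ : Euc d => (0:ℂ)) = 0 := by
      rw [CubeInt]; simp
    rw [h1, h2, sub_zero, norm_zero]
    exact le_of_lt hη
  · obtain ⟨T, hT⟩ := hG (η / ‖a‖) (div_pos hη (norm_pos_iff.2 ha))
    refine ⟨T, fun t ht ht0 x => ?_⟩
    have h1 : Avg e (fun x => a * f x) t x = a * Avg e f t x := by
      rw [Avg, Avg, ← MeasureTheory.integral_const_mul]
      congr 1; funext y; ring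
    have h2 : CubeInt (fun x => a * f x) = a * CubeInt f := by
      rw [CubeInt, CubeInt, ← MeasureTheory.integral_const_mul]
    rw [h1, h2, ← mul_sub, norm_mul]
    calc ‖a‖ * ‖Avg e f t x - CubeInt f‖ ≤ ‖a‖ * (η / ‖a‖) :=
          mul_le_mul_of_nonneg_left (hT t ht ht0 x) (norm_nonneg a)
      _ = η := by
          rw [mul_comm]
          exact div_mul_cancel₀ η (norm_ne_zero_iff.2 ha)

theorem Gprop_of_approx (hd : 1 ≤ d) (he : ‖e‖ = 1) {f : Euc d → ℂ} (hf : Nice f)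
    (h : ∀ ε > 0, ∃ g, Nice g ∧ (∀ x, ‖f x - g x‖ ≤ ε) ∧ Gprop e g) : Gprop e f := by
  
  intro η hη
  obtain ⟨g, hg, hfg, hGg⟩ := h (η/3) (by positivity)
  obtain ⟨T, hT⟩ := hGg (η/3) (by positivity)
  refine ⟨T, fun t ht ht0 x => ?_⟩
  calc ‖Avg e f t x - CubeInt f‖
      ≤ ‖Avg e f t x - Avg e g t x‖ + ‖Avg e g t x - CubeInt g‖ +
        ‖CubeInt g - CubeInt f‖ := by
        have : Avg e f t x - CubeInt f = (Avg e f t x - Avg e g t x) +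
            (Avg e g t x - CubeInt g) + (CubeInt g - CubeInt f) := by ring
        rw [this]
        exact le_trans (norm_add_le _ _) (add_le_add (norm_add_le _ _) le_rfl)
    _ ≤ η/3 + η/3 + η/3 := by
        apply add_le_add (add_le_add ?_ (hT t ht ht0 x)) ?_
        · exact avg_sub_le hd he hf hg hfg t ht0 x
        · apply cubeInt_sub_le hg hf (by positivity)
          intro z
          rw [norm_sub_rev]
          exact hfg z
    _ = η := by ring

/-! ### torus -/

theorem torProj_isQuotientMap : IsQuotientMap (torProj d) := by
  
  have h1 : IsOpenQuotientMap (Pi.map fun (_ : Fin d) => (QuotientAddGroup.mk : ℝ → AddCircle (1:ℝ))) :=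
    IsOpenQuotientMap.piMap fun _ => QuotientAddGroup.isOpenQuotientMap_mk
  set hh := (PiLp.continuousLinearEquiv 2 ℝ (fun _ : Fin d => ℝ)).toHomeomorph with hhdef
  have h2 : IsOpenQuotientMap (⇑hh) := ⟨hh.surjective, hh.continuous, hh.isOpenMap⟩
  have h3 : torProj d = (Pi.map fun (_ : Fin d) => (QuotientAddGroup.mk : ℝ → AddCircle (1:ℝ))) ∘ ⇑hh := rfl
  rw [h3]
  exact (h1.comp h2).isQuotientMap

theorem torProj_eq_iff (x y : Euc d) : torProj d x = torProj d y ↔ IsIntVec (x - y) := by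
  
  constructor
  · intro h i
    have hi : ((x i : ℝ) : AddCircle (1:ℝ)) = ((y i : ℝ) : AddCircle (1:ℝ)) := congrFun h i
    rw [QuotientAddGroup.eq] at hi
    obtain ⟨n, hn⟩ := AddSubgroup.mem_zmultiples_iff.1 hi
    refine ⟨-n, ?_⟩
    have : (n : ℝ) = -(x i) + y i := by
      rw [← hn]; simp
    have hsub : (x - y) i = x i - y i := rfl
    rw [hsub]
    push_cast
    linarith
  · intro h
    funext i
    obtain ⟨n, hn⟩ := h i
    have hsub : (x - y) i = x i - y i := rfl
    rw [hsub] at hn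
    show ((x i : ℝ) : AddCircle (1:ℝ)) = ((y i : ℝ) : AddCircle (1:ℝ))
    rw [QuotientAddGroup.eq]
    apply AddSubgroup.mem_zmultiples_iff.2
    refine ⟨-n, ?_⟩
    simp only [zsmul_eq_mul, mul_one]
    push_cast
    linarith

def torChar (d : ℕ) (k : Fin d → ℤ) : C(Tor d, ℂ) :=
  ∏ i, (fourier (k i)).comp ⟨fun τ => τ i, continuous_apply i⟩

theorem torChar_apply (k : Fin d → ℤ) (τ : Tor d) :
    torChar d k τ = ∏ i, fourier (k i) (τ i) := by
  
  rw [torChar]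
  rw [ContinuousMap.prod_apply]
  rfl

theorem torChar_proj (k : Fin d → ℤ) (x : Euc d) :
    torChar d k (torProj d x) = eChar k x := by
  
  rw [torChar_apply]
  have h : ∀ i, fourier (k i) ((torProj d x) i) = Complex.exp (2 * π * I * (k i : ℂ) * (x i : ℂ)) := by
    intro i
    show fourier (k i) ((x i : ℝ) : AddCircle (1:ℝ)) = _
    rw [fourier_coe_apply]
    norm_num
  rw [Finset.prod_congr rfl fun i _ => h i, ← Complex.exp_sum, eChar]
  congr 1
  rw [Finset.mul_sum]
  exact Finset.sum_congr rfl fun i _ => by ring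

theorem torChar_zero : torChar d 0 = 1 := by
  ext τ
  rw [torChar_apply]
  simp [fourier_zero]

theorem torChar_mul (k l : Fin d → ℤ) :
    torChar d k * torChar d l = torChar d (k + l) := by
  ext τ
  rw [ContinuousMap.mul_apply, torChar_apply, torChar_apply, torChar_apply,
    ← Finset.prod_mul_distrib]
  exact Finset.prod_congr rfl fun i _ => (fourier_add (m := k i) (n := l i) (x := τ i)).symm

theorem torChar_star (k : Fin d → ℤ) :
    star (torChar d k) = torChar d (-k) := by
  ext τ
  rw [ContinuousMap.star_apply, torChar_apply, torChar_apply]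
  rw [star_prod]
  exact Finset.prod_congr rfl fun i _ => (fourier_neg (n := k i) (x := τ i)).symm

def torAlg (d : ℕ) : StarSubalgebra ℂ C(Tor d, ℂ) where
  toSubalgebra := (Submodule.span ℂ (Set.range (torChar d))).toSubalgebra
    (Submodule.subset_span ⟨0, torChar_zero⟩)
    (by
      intro f g hf hg
      have hss : Submodule.span ℂ (Set.range (torChar d)) * Submodule.span ℂ (Set.range (torChar d))
          ≤ Submodule.span ℂ (Set.range (torChar d)) := by
        rw [Submodule.span_mul_span]
        apply Submodule.span_le.2
        rintro z ⟨a, ⟨k, rfl⟩, b, ⟨l, rfl⟩, rfl⟩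
        exact Submodule.subset_span ⟨k + l, (torChar_mul k l).symm⟩
      exact hss (Submodule.mul_mem_mul hf hg))
  star_mem' := by
    intro f hf
    have hf' : f ∈ Submodule.span ℂ (Set.range (torChar d)) := hf
    show star f ∈ Submodule.span ℂ (Set.range (torChar d))
    clear hf
    induction hf' using Submodule.span_induction with
    | mem g hg =>
      obtain ⟨k, rfl⟩ := hg
      rw [torChar_star]
      exact Submodule.subset_span ⟨-k, rfl⟩
    | zero => simp
    | add a b _ _ ha hb => rw [star_add]; exact Submodule.add_mem _ ha hb
    | smul c a _ ha => rw [star_smul]; exact Submodule.smul_mem _ _ ha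

theorem torChar_single (i : Fin d) (τ : Tor d) :
    torChar d (Pi.single i 1) τ = fourier 1 (τ i) := by
  rw [torChar_apply]
  rw [Finset.prod_eq_single i]
  · rw [Pi.single_eq_same]
  · intro j _ hji
    rw [Pi.single_eq_of_ne hji, fourier_zero]
  · intro h
    exact absurd (Finset.mem_univ i) h

theorem torAlg_separates : ((torAlg d) : StarSubalgebra ℂ C(Tor d, ℂ)).SeparatesPoints := by
  intro τ σ hne
  obtain ⟨i, hi⟩ : ∃ i, τ i ≠ σ i := by
    by_contra h
    push_neg at h
    exact hne (funext h)
  refine ⟨_, ⟨torChar d (Pi.single i 1),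
    Submodule.subset_span ⟨Pi.single i 1, rfl⟩, rfl⟩, ?_⟩
  show torChar d (Pi.single i 1) τ ≠ torChar d (Pi.single i 1) σ
  rw [torChar_single, torChar_single]
  intro h
  apply hi
  have h1 : AddCircle.toCircle ((1:ℤ) • τ i) = AddCircle.toCircle ((1:ℤ) • σ i) := by
    have := h
    rw [fourier_apply, fourier_apply] at this
    exact Circle.coe_injective this
  have := AddCircle.injective_toCircle (one_ne_zero) h1
  simpa using this

/-- Stone–Weierstrass: every continuous function on the torus is uniformly approximable by
trigonometric polynomials. -/
theorem torChar_approx (f : C(Tor d, ℂ)) {ε : ℝ} (hε : 0 < ε) :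
    ∃ c : (Fin d → ℤ) →₀ ℂ, ∀ τ, ‖f τ - (c.sum fun k a => a • torChar d k) τ‖ ≤ ε := by
  
  have hA : (torAlg d).topologicalClosure = ⊤ :=
    ContinuousMap.starSubalgebra_topologicalClosure_eq_top_of_separatesPoints _ torAlg_separates
  have hmem : f ∈ closure ((torAlg d) : Set C(Tor d, ℂ)) := by
    have : f ∈ (torAlg d).topologicalClosure := by rw [hA]; trivial
    exact this
  obtain ⟨g, hg, hdist⟩ := Metric.mem_closure_iff.1 hmem ε hε
  have hg' : g ∈ Submodule.span ℂ (Set.range (torChar d)) := by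
    have : g ∈ (torAlg d) := hg
    exact this
  rw [Finsupp.mem_span_range_iff_exists_finsupp] at hg'
  obtain ⟨c, hc⟩ := hg'
  refine ⟨c, fun τ => ?_⟩
  rw [hc]
  calc ‖f τ - g τ‖ = dist (f τ) (g τ) := (dist_eq_norm _ _).symm
    _ ≤ dist f g := ContinuousMap.dist_apply_le_dist τ
    _ ≤ ε := le_of_lt hdist

theorem Nice.const_mul {f : Euc d → ℂ} (hf : Nice f) (a : ℂ) :
    Nice (fun x => a * f x) := by
  obtain ⟨C, hC⟩ := hf.2
  exact ⟨continuous_const.mul hf.1, ‖a‖ * C, fun x => by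
    rw [norm_mul]
    exact mul_le_mul_of_nonneg_left (hC x) (norm_nonneg a)⟩

theorem nice_bcf (u : BoundedContinuousFunction (Euc d) ℝ) :
    Nice (fun x => ((u x : ℝ) : ℂ)) := by
  refine ⟨Complex.continuous_ofReal.comp u.continuous, ‖u‖, fun x => ?_⟩
  rw [Complex.norm_real]
  exact u.norm_coe_le_norm x

/-! ### main result for a single periodic function -/

theorem Gprop_of_periodic (hd : 1 ≤ d) (he : ‖e‖ = 1) (hirr : ¬ RatDir e)
    (u : BoundedContinuousFunction (Euc d) ℝ)
    (hper : ∀ (x z : Euc d), IsIntVec z → u (x + z) = u x) :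
    Gprop e (fun x => (u x : ℂ)) := by
  
  apply Gprop_of_approx hd he (nice_bcf u)
  intro ε hε
  -- lift u to the torus
  have hUproj : ∀ x : Euc d, u (WithLp.toLp 2 fun i => Quotient.out ((torProj d x) i)) = u x := by
    intro x
    set x' : Euc d := (WithLp.toLp 2 fun i => Quotient.out ((torProj d x) i)) with hx'
    have hq : torProj d x' = torProj d x := by
      funext i
      show ((Quotient.out ((torProj d x) i) : ℝ) : AddCircle (1:ℝ)) = (x i : AddCircle (1:ℝ))
      exact QuotientAddGroup.out_eq' _
    have hint : IsIntVec (x' - x) := (torProj_eq_iff _ _).1 hq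
    have h := hper x (x' - x) hint
    rw [show x + (x' - x) = x' by abel] at h
    exact h
  set U₀ : Tor d → ℝ := fun τ => u (WithLp.toLp 2 fun i => Quotient.out (τ i)) with hU₀
  have hU₀proj : ∀ x, U₀ (torProj d x) = u x := hUproj
  have hU₀cont : Continuous U₀ := by
    rw [(torProj_isQuotientMap (d := d)).continuous_iff]
    have hcomp : U₀ ∘ torProj d = ⇑u := funext hU₀proj
    rw [hcomp]
    exact u.continuous
  set Fc : C(Tor d, ℂ) := ⟨fun τ => ((U₀ τ : ℝ) : ℂ), Complex.continuous_ofReal.comp hU₀cont⟩ with hFc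
  obtain ⟨c, hc⟩ := torChar_approx Fc hε
  refine ⟨fun x => ∑ k ∈ c.support, c k * eChar k x, ?_, ?_, ?_⟩
  · exact Nice_sum c.support _ fun k _ => (eChar_nice k).const_mul (c k)
  · intro x
    have heval : (c.sum fun k a => a • torChar d k) (torProj d x)
        = ∑ k ∈ c.support, c k * eChar k x := by
      rw [Finsupp.sum, ContinuousMap.coe_sum, Finset.sum_apply]
      exact Finset.sum_congr rfl fun k _ => by
        rw [ContinuousMap.smul_apply, torChar_proj, smul_eq_mul]
    have hfx : ((u x : ℝ) : ℂ) = Fc (torProj d x) := by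
      rw [hFc]
      show _ = ((U₀ (torProj d x) : ℝ) : ℂ)
      rw [hU₀proj]
    show ‖((u x : ℝ):ℂ) - ∑ k ∈ c.support, c k * eChar k x‖ ≤ ε
    rw [hfx, ← heval]
    exact hc (torProj d x)
  · exact Gprop_sum hd he c.support _ (fun k _ => (eChar_nice k).const_mul (c k))
      (fun k _ => Gprop_smul (eChar_nice k) (Gprop_char hd he hirr k) (c k))

/-! ### real-complex bridge -/

theorem avg_real (u : BoundedContinuousFunction (Euc d) ℝ) (t : ℝ) (x : Euc d) :
    Avg e (fun x => (u x : ℂ)) t x = ((∫ y : (ℝ ∙ e)ᗮ, u (x + (y : Euc d)) * ker d t e y : ℝ) : ℂ) := by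
  
  rw [Avg]
  rw [show (fun y : ((ℝ ∙ e)ᗮ : Submodule ℝ (Euc d)) =>
      ((u (x + (y : Euc d)) : ℝ):ℂ) * ((ker d t e y : ℝ):ℂ))
      = fun y : ((ℝ ∙ e)ᗮ : Submodule ℝ (Euc d)) =>
      (((u (x + (y : Euc d)) * ker d t e y : ℝ)):ℂ) by
    funext y; push_cast; ring]
  exact integral_ofReal

theorem avg_sub_le_real (hd : 1 ≤ d) (he : ‖e‖ = 1)
    (u v : BoundedContinuousFunction (Euc d) ℝ) {ε : ℝ}
    (huv : ∀ z, ‖u z - v z‖ ≤ ε) (t : ℝ) (ht : 0 < t) (x : Euc d) : True := trivial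

theorem cube_real (u : BoundedContinuousFunction (Euc d) ℝ) :
    CubeInt (fun x => (u x : ℂ)) = ((∫ z in unitCube d, u z : ℝ) : ℂ) := by
  
  rw [CubeInt]
  exact integral_ofReal

end HypAvg

open HypAvg Complex in
theorem hyperplane_averaging (d : ℕ) (hd : 2 ≤ d)
    (e : Euc d) (he : ‖e‖ = 1) (hirr : ¬ RatDir e)
    (F : Set (BoundedContinuousFunction (Euc d) ℝ)) (hFc : IsCompact F)
    (hFper : ∀ u ∈ F, ∀ (x z : Euc d), IsIntVec z → u (x + z) = u x) :
    ∀ η > 0, ∃ T : ℝ, ∀ t ≥ T, 0 < t → ∀ u ∈ F, ∀ x : Euc d,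
      |(∫ y : (ℝ ∙ e)ᗮ,
          u (x + (y : Euc d)) *
            ((4 * Real.pi * t) ^ (-((d : ℝ) - 1) / 2) *
              Real.exp (-‖(y : Euc d)‖ ^ 2 / (4 * t))))
        - ∫ z in unitCube d, u z| ≤ η := by
  
  intro η hη
  have hd1 : 1 ≤ d := le_trans one_le_two hd
  have hcover : F ⊆ ⋃ u : F, Metric.ball (u : BoundedContinuousFunction (Euc d) ℝ) (η/3) := by
    intro u hu
    exact Set.mem_iUnion.2 ⟨⟨u, hu⟩, by simp [Metric.mem_ball]; positivity⟩
  obtain ⟨s, hs⟩ := hFc.elim_finite_subcover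
    (fun u : F => Metric.ball (u : BoundedContinuousFunction (Euc d) ℝ) (η/3))
    (fun u => Metric.isOpen_ball) hcover
  have hG : ∀ v : F, Gprop e (fun x => (((v : BoundedContinuousFunction (Euc d) ℝ) x : ℝ) : ℂ)) :=
    fun v => Gprop_of_periodic hd1 he hirr v (hFper v v.2)
  choose T hT using fun v : F => hG v (η/3) (by positivity)
  refine ⟨∑ v ∈ s, |T v|, fun t ht ht0 u hu x => ?_⟩
  obtain ⟨v, hvs, hv⟩ : ∃ v ∈ s, u ∈ Metric.ball
      ((v : F) : BoundedContinuousFunction (Euc d) ℝ) (η/3) := by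
    have := hs hu
    simpa using this
  have htv : T v ≤ t :=
    le_trans (le_trans (le_abs_self _)
      (Finset.single_le_sum (fun w _ => abs_nonneg (T w)) hvs)) ht
  set fu : Euc d → ℂ := fun z => ((u z : ℝ) : ℂ) with hfu
  set fv : Euc d → ℂ := fun z => (((((v : F) : BoundedContinuousFunction (Euc d) ℝ)) z : ℝ) : ℂ) with hfv
  have hdistuv : dist u ((v : F) : BoundedContinuousFunction (Euc d) ℝ) < η/3 := by
    simpa [Metric.mem_ball] using hv
  have hptw : ∀ z, ‖fu z - fv z‖ ≤ η/3 := by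
    intro z
    rw [hfu, hfv]
    rw [show ((u z : ℝ):ℂ) - (((((v : F) : BoundedContinuousFunction (Euc d) ℝ)) z : ℝ):ℂ)
        = (((u z - (((v : F) : BoundedContinuousFunction (Euc d) ℝ)) z : ℝ)):ℂ) by push_cast; ring]
    rw [Complex.norm_real, Real.norm_eq_abs, ← Real.dist_eq]
    exact le_of_lt (lt_of_le_of_lt (BoundedContinuousFunction.dist_coe_le_dist z) hdistuv)
  have h1 : ‖Avg e fu t x - Avg e fv t x‖ ≤ η/3 :=
    avg_sub_le hd1 he (nice_bcf u) (nice_bcf _) hptw t ht0 x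
  have h2 : ‖Avg e fv t x - CubeInt fv‖ ≤ η/3 := hT v t htv ht0 x
  have h3 : ‖CubeInt fv - CubeInt fu‖ ≤ η/3 := by
    apply cubeInt_sub_le (nice_bcf _) (nice_bcf u) (by positivity)
    intro z
    rw [norm_sub_rev]
    exact hptw z
  have hbridge : |(∫ y : (ℝ ∙ e)ᗮ,
          u (x + (y : Euc d)) *
            ((4 * Real.pi * t) ^ (-((d : ℝ) - 1) / 2) *
              Real.exp (-‖(y : Euc d)‖ ^ 2 / (4 * t))))
        - ∫ z in unitCube d, u z| = ‖Avg e fu t x - CubeInt fu‖ := by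
    rw [avg_real u t x, cube_real u]
    rw [← Complex.ofReal_sub, Complex.norm_real, Real.norm_eq_abs]
    rfl
  rw [hbridge]
  calc ‖Avg e fu t x - CubeInt fu‖
      ≤ ‖Avg e fu t x - Avg e fv t x‖ + ‖Avg e fv t x - CubeInt fv‖ +
        ‖CubeInt fv - CubeInt fu‖ := by
        have : Avg e fu t x - CubeInt fu = (Avg e fu t x - Avg e fv t x) +
            (Avg e fv t x - CubeInt fv) + (CubeInt fv - CubeInt fu) := by ring
        rw [this]
        exact le_trans (norm_add_le _ _) (add_le_add (norm_add_le _ _) le_rfl)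
    _ ≤ η/3 + η/3 + η/3 := add_le_add (add_le_add h1 h2) h3
    _ = η := by ring

end
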